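/- Let S, Q ⊆ {-1,0,1}^n. If Q does not contain any set X ∪ {y} such that (X, y) is a violating pair for S, then there exists a convex set S' ⊆ {-1,0,1}^n with S' ∩ Q = S ∩ Q. -/
import Mathlib

/-- The ternary hypercube `{-1,0,1}^n` as a subset of `ℝ^n`. -/
def ternarySet (n : ℕ) : Set (Fin n → ℝ) :=
  {x | ∀ i, x i = -1 ∨ x i = 0 ∨ x i = 1}

/-- If `Q` does not contain any `X ∪ {y}` such that `(X, y)` is a violating pair for `S`,
then there exists a convex set `S'` with `S' ∩ Q = S ∩ Q`. -/
theorem stmt_3 (n : ℕ) (S Q : Set (Fin n → ℝ))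
    (hS : S ⊆ ternarySet n) (hQ : Q ⊆ ternarySet n)
    (hno : ∀ (X : Set (Fin n → ℝ)) (y : Fin n → ℝ),
      X ⊆ S → y ∈ convexHull ℝ X → y ∈ ternarySet n → y ∉ S →
      ¬(X ∪ {y} ⊆ Q)) :
    ∃ S' : Set (Fin n → ℝ),
      S' = convexHull ℝ S' ∩ ternarySet n ∧ S' ∩ Q = S ∩ Q := by
  refine ⟨convexHull ℝ (S ∩ Q) ∩ ternarySet n, ?_, ?_⟩
  · apply Set.Subset.antisymm
    · exact Set.subset_inter (subset_convexHull ℝ _) Set.inter_subset_right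
    · refine Set.inter_subset_inter_left _ ?_
      calc convexHull ℝ (convexHull ℝ (S ∩ Q) ∩ ternarySet n)
          ⊆ convexHull ℝ (convexHull ℝ (S ∩ Q)) :=
            convexHull_mono Set.inter_subset_left
        _ = convexHull ℝ (S ∩ Q) := (convex_convexHull ℝ _).convexHull_eq
  · apply Set.Subset.antisymm
    · rintro y ⟨⟨hyc, hyt⟩, hyQ⟩
      refine ⟨?_, hyQ⟩
      by_contra hyS
      exact hno (S ∩ Q) y Set.inter_subset_left hyc hyt hyS
        (Set.union_subset Set.inter_subset_right (Set.singleton_subset_iff.mpr hyQ))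
    · rintro y ⟨hyS, hyQ⟩
      exact ⟨⟨subset_convexHull ℝ _ ⟨hyS, hyQ⟩, hS hyS⟩, hyQ⟩
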